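/- The map σ : BL(ℤ) → {±1} assigning to each bi-Lipschitz bijection f of ℤ its 'orientation' (σ(f) = 1 if sup|f(x) - x| < ∞, σ(f) = -1 if sup|f(x) + x| < ∞) is a well-defined group homomorphism. -/

import Mathlib

/-- A permutation of ℤ is bi-Lipschitz if both it and its inverse are Lipschitz. -/
def IsBiLipschitzPerm (f : Equiv.Perm ℤ) : Prop :=
  ∃ K L : ℤ, (∀ x y : ℤ, |f x - f y| ≤ K * |x - y|) ∧
    (∀ u v : ℤ, |f.symm u - f.symm v| ≤ L * |u - v|)

namespace BLZAux

/-- Discrete intermediate value: a K-step function passes within K of every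
intermediate value. -/
lemma ivt (h : ℤ → ℤ) (K : ℤ) (hK : 0 ≤ K)
    (hlip : ∀ z : ℤ, |h (z + 1) - h z| ≤ K) :
    ∀ n : ℕ, ∀ y m : ℤ,
      ((h y ≤ m ∧ m ≤ h (y + n)) ∨ (h (y + n) ≤ m ∧ m ≤ h y)) →
      ∃ z : ℤ, y ≤ z ∧ z ≤ y + n ∧ |h z - m| ≤ K := by
  intro n
  induction n with
  | zero =>
      intro y m hm
      simp only [Nat.cast_zero, add_zero] at hm
      have hme : m = h y := by omega
      exact ⟨y, le_refl _, by simp, by simpa [hme] using hK⟩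
  | succ n ih =>
      intro y m hm
      have e : y + ((n + 1 : ℕ) : ℤ) = (y + 1) + (n : ℕ) := by push_cast; ring
      rw [e] at hm
      by_cases hc : (h y ≤ m ∧ m ≤ h (y + 1)) ∨ (h (y + 1) ≤ m ∧ m ≤ h y)
      · refine ⟨y, le_refl _, by push_cast; omega, ?_⟩
        have h1 := hlip y
        rw [abs_le] at h1 ⊢
        omega
      · have hm' : (h (y + 1) ≤ m ∧ m ≤ h (y + 1 + (n : ℕ))) ∨
            (h (y + 1 + (n : ℕ)) ≤ m ∧ m ≤ h (y + 1)) := by omega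
        obtain ⟨z, hz1, hz2, hz3⟩ := ih (y + 1) m hm'
        exact ⟨z, by omega, by push_cast; omega, hz3⟩

lemma count_aux (g : ℤ → ℤ) (hg : Function.Injective g) {m1 m2 A B : ℤ}
    (hm : m1 ≤ m2) (h : ∀ m, m1 ≤ m → m ≤ m2 → A ≤ g m ∧ g m ≤ B) :
    m2 - m1 ≤ B - A := by
  have hsub : (Finset.Icc m1 m2).image g ⊆ Finset.Icc A B := by
    intro u hu
    simp only [Finset.mem_image, Finset.mem_Icc] at hu ⊢
    obtain ⟨m, ⟨h1, h2⟩, rfl⟩ := hu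
    exact h m h1 h2
  have hcard := Finset.card_le_card hsub
  rw [Finset.card_image_of_injective _ hg, Int.card_Icc, Int.card_Icc] at hcard
  omega

lemma lip_one_le (f g : ℤ → ℤ) (K : ℤ)
    (hf : ∀ x y : ℤ, |f x - f y| ≤ K * |x - y|)
    (hgf : ∀ x, g (f x) = x) : 1 ≤ K := by
  have h1 := hf 1 0
  have hne : f 1 - f 0 ≠ 0 := by
    intro hc
    have h3 : f 1 = f 0 := by omega
    have h4 := congrArg g h3
    rw [hgf, hgf] at h4
    exact one_ne_zero h4
  have h2 := Int.one_le_abs hne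
  have e : |(1 : ℤ) - 0| = 1 := by norm_num
  rw [e, mul_one] at h1
  linarith

lemma rigid_core (f g : ℤ → ℤ) (K L : ℤ)
    (hf : ∀ x y : ℤ, |f x - f y| ≤ K * |x - y|)
    (hg : ∀ u v : ℤ, |g u - g v| ≤ L * |u - v|)
    (hgf : ∀ x, g (f x) = x) (hfg : ∀ m, f (g m) = m)
    {x y : ℤ} (hxy : y ≤ x) (hv : f y ≤ f x) :
    f x - f y ≤ (x - y) + 2 * (K * L) := by
  have hK : 1 ≤ K := lip_one_le f g K hf hgf
  have hL : 1 ≤ L := lip_one_le g f L hg hfg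
  have ginj : Function.Injective g := by
    intro u v huv
    have := congrArg f huv
    rwa [hfg, hfg] at this
  have hstep : ∀ z : ℤ, |f (z + 1) - f z| ≤ K := by
    intro z
    have := hf (z + 1) z
    rwa [show (z + 1) - z = (1 : ℤ) from by ring, abs_one, mul_one] at this
  have key : ∀ m, f y ≤ m → m ≤ f x → y - L * K ≤ g m ∧ g m ≤ x + L * K := by
    intro m h1 h2
    have hx' : y + (((x - y).toNat : ℕ) : ℤ) = x := by omega
    obtain ⟨z, hz1, hz2, hz3⟩ := ivt f K (by linarith) hstep (x - y).toNat y m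
      (by rw [hx']; exact Or.inl ⟨h1, h2⟩)
    rw [hx'] at hz2
    have h4 := hg m (f z)
    rw [hgf] at h4
    have h5 : |m - f z| ≤ K := by rw [abs_sub_comm]; exact hz3
    have h6 : L * |m - f z| ≤ L * K := by
      apply mul_le_mul_of_nonneg_left h5 (by linarith)
    have h7 : |g m - z| ≤ L * K := le_trans h4 h6
    rw [abs_le] at h7
    constructor <;> linarith
  have hcount := count_aux g ginj hv key
  have hcomm : L * K = K * L := mul_comm L K
  linarith

lemma rigid_upper (f g : ℤ → ℤ) (K L : ℤ)
    (hf : ∀ x y : ℤ, |f x - f y| ≤ K * |x - y|)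
    (hg : ∀ u v : ℤ, |g u - g v| ≤ L * |u - v|)
    (hgf : ∀ x, g (f x) = x) (hfg : ∀ m, f (g m) = m) :
    ∀ x y : ℤ, |f x - f y| ≤ |x - y| + 2 * (K * L) := by
  have main : ∀ x y : ℤ, y ≤ x → |f x - f y| ≤ (x - y) + 2 * (K * L) := by
    intro x y hxy
    rcases le_total (f y) (f x) with hv | hv
    · rw [abs_of_nonneg (by linarith)]
      exact rigid_core f g K L hf hg hgf hfg hxy hv
    · rw [abs_of_nonpos (by linarith)]
      have hf' : ∀ u v : ℤ, |(-f u) - (-f v)| ≤ K * |u - v| := by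
        intro u v
        rw [neg_sub_neg, abs_sub_comm]
        exact hf u v
      have hg' : ∀ u v : ℤ, |g (-u) - g (-v)| ≤ L * |u - v| := by
        intro u v
        have h1 := hg (-u) (-v)
        rwa [show |(-u) - (-v)| = |u - v| from by rw [neg_sub_neg, abs_sub_comm]] at h1
      have hgf' : ∀ t : ℤ, g (-(-f t)) = t := by
        intro t; rw [neg_neg]; exact hgf t
      have hfg' : ∀ m : ℤ, -f (g (-m)) = m := by
        intro m; rw [hfg]; exact neg_neg m
      have := rigid_core (fun t => -f t) (fun m => g (-m)) K L hf' hg' hgf' hfg'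
        hxy (by simpa using hv)
      linarith
  intro x y
  rcases le_total y x with hxy | hxy
  · rw [abs_of_nonneg (by linarith : (0:ℤ) ≤ x - y)]
    exact main x y hxy
  · rw [abs_sub_comm (f x), abs_sub_comm x y,
      abs_of_nonneg (by linarith : (0:ℤ) ≤ y - x)]
    exact main y x hxy

lemma rigid_lower (f g : ℤ → ℤ) (K L : ℤ)
    (hf : ∀ x y : ℤ, |f x - f y| ≤ K * |x - y|)
    (hg : ∀ u v : ℤ, |g u - g v| ≤ L * |u - v|)
    (hgf : ∀ x, g (f x) = x) (hfg : ∀ m, f (g m) = m) :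
    ∀ x y : ℤ, |x - y| ≤ |f x - f y| + 2 * (K * L) := by
  intro x y
  have := rigid_upper g f L K hg hf hfg hgf (f x) (f y)
  rw [hgf, hgf] at this
  have hcomm : L * K = K * L := mul_comm L K
  linarith


/-- Main estimate: if f is bi-Lipschitz and f X > 0 at the threshold point X,
then f has bounded displacement. -/
lemma main_pos (f g : ℤ → ℤ) (K L : ℤ)
    (hf : ∀ x y : ℤ, |f x - f y| ≤ K * |x - y|)
    (hg : ∀ u v : ℤ, |g u - g v| ≤ L * |u - v|)
    (hgf : ∀ x, g (f x) = x) (hfg : ∀ m, f (g m) = m)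
    (C X : ℤ) (hC : C = 2 * (K * L)) (hXd : X = |f 0| + 3 * C + 1)
    (hX : 0 < f X) :
    ∀ z : ℤ, |f z - z| ≤ |f 0| + 4 * X + 3 * C := by
  have hK : 1 ≤ K := lip_one_le f g K hf hgf
  have hL : 1 ≤ L := lip_one_le g f L hg hfg
  have hC2 : 2 ≤ C := by nlinarith
  have habs : 0 ≤ |f 0| := abs_nonneg _
  have ha1 : f 0 ≤ |f 0| := le_abs_self _
  have ha2 : -|f 0| ≤ f 0 := neg_abs_le _
  have hXpos : 0 < X := by linarith
  have rig : ∀ x y : ℤ, y ≤ x →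
      (f x - f y ≤ (x - y) + C ∧ f y - f x ≤ (x - y) + C ∧
        ((x - y) - C ≤ f x - f y ∨ (x - y) - C ≤ f y - f x)) := by
    intro x y hxy
    have h1 := rigid_upper f g K L hf hg hgf hfg x y
    have h2 := rigid_lower f g K L hf hg hgf hfg x y
    rw [abs_of_nonneg (by linarith : (0:ℤ) ≤ x - y), ← hC] at h1 h2
    rw [abs_le] at h1
    refine ⟨h1.2, by linarith [h1.1], ?_⟩
    rcases le_abs.mp (by linarith : x - y - C ≤ |f x - f y|) with h | h
    · exact Or.inl h
    · right; linarith
  obtain ⟨u1, u2, ud⟩ := rig X 0 (by linarith)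
  have hP : X + f 0 - C ≤ f X ∧ f X ≤ X + f 0 + C := by
    constructor
    · rcases ud with h | h
      · linarith
      · exfalso; linarith
    · linarith
  obtain ⟨v1, v2, vd⟩ := rig 0 (-X) (by linarith)
  obtain ⟨w1, w2, wd⟩ := rig X (-X) (by linarith)
  have hQ : f 0 - X - C ≤ f (-X) ∧ f (-X) ≤ f 0 - X + C := by
    constructor
    · linarith
    · rcases vd with h | h
      · linarith
      · exfalso
        rcases wd with h2 | h2
        · linarith [hP.2]
        · linarith [hP.1]
  have step3 : ∀ z : ℤ, X ≤ z → f 0 + z - 2 * C ≤ f z ∧ f z ≤ f 0 + z + 2 * C := by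
    intro z hz
    obtain ⟨s1, s2, sd⟩ := rig z X hz
    obtain ⟨t1, t2, td⟩ := rig z (-X) (by linarith)
    refine ⟨?_, by linarith [hP.2]⟩
    rcases td with h | h
    · linarith [hQ.1]
    · exfalso
      linarith [hQ.2, hP.1]
  have step4 : ∀ z : ℤ, z ≤ -2 * X → f 0 + z - 2 * C ≤ f z ∧ f z ≤ f 0 + z + 3 * C := by
    intro z hz
    obtain ⟨s1, s2, sd⟩ := rig X z (by linarith)
    have hlow : f 0 + z - 2 * C ≤ f z := by linarith [hP.1]
    refine ⟨hlow, ?_⟩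
    obtain ⟨q1, q2, qd⟩ := rig (-X) z (by linarith)
    rcases qd with h | h
    · linarith [hQ.2]
    · obtain ⟨e1, e2⟩ := step3 (-z) (by linarith)
      obtain ⟨w1', w2', wd'⟩ := rig (-z) z (by linarith)
      rcases wd' with h2 | h2
      · linarith
      · exfalso
        linarith [hP.2]
  intro z
  rw [abs_le]
  rcases le_or_gt X z with hz | hz
  · obtain ⟨e1, e2⟩ := step3 z hz
    constructor <;> linarith
  rcases le_or_gt z (-2 * X) with hz2 | hz2
  · obtain ⟨e1, e2⟩ := step4 z hz2
    constructor <;> linarith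
  rcases le_or_gt 0 z with hz3 | hz3
  · obtain ⟨e1, e2, _⟩ := rig z 0 hz3
    constructor <;> linarith
  · obtain ⟨e1, e2, _⟩ := rig 0 z (by linarith)
    constructor <;> linarith



lemma exists_bdd (f : Equiv.Perm ℤ) (h : IsBiLipschitzPerm f) :
    (∃ M : ℤ, ∀ x : ℤ, |f x - x| ≤ M) ∨ (∃ M : ℤ, ∀ x : ℤ, |f x + x| ≤ M) := by
  obtain ⟨K, L, hf, hg⟩ := h
  have hgf : ∀ x : ℤ, f.symm (f x) = x := f.symm_apply_apply
  have hfg : ∀ m : ℤ, f (f.symm m) = m := f.apply_symm_apply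
  have hK : 1 ≤ K := lip_one_le (⇑f) (⇑f.symm) K hf hgf
  have hL : 1 ≤ L := lip_one_le (⇑f.symm) (⇑f) L hg hfg
  set C : ℤ := 2 * (K * L) with hC
  set X : ℤ := |f (0:ℤ)| + 3 * C + 1 with hXd
  have hC2 : 2 ≤ C := by nlinarith
  have habs : 0 ≤ |f (0:ℤ)| := abs_nonneg _
  have hXpos : 0 < X := by linarith
  rcases lt_trichotomy (f X) 0 with hneg | h0 | hpos
  · right
    have hf' : ∀ u v : ℤ, |(-f u) - (-f v)| ≤ K * |u - v| := by
      intro u v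
      rw [neg_sub_neg, abs_sub_comm]
      exact hf u v
    have hg' : ∀ u v : ℤ, |f.symm (-u) - f.symm (-v)| ≤ L * |u - v| := by
      intro u v
      have h1 := hg (-u) (-v)
      rwa [show |(-u) - (-v)| = |u - v| from by rw [neg_sub_neg, abs_sub_comm]] at h1
    have hgf' : ∀ t : ℤ, f.symm (-(-f t)) = t := by
      intro t; rw [neg_neg]; exact hgf t
    have hfg' : ∀ m : ℤ, -f (f.symm (-m)) = m := by
      intro m; rw [hfg]; exact neg_neg m
    have hXd' : X = |(fun t => -f t) 0| + 3 * C + 1 := by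
      simp only [abs_neg]
      exact hXd
    have hmain := main_pos (fun t => -f t) (fun m => f.symm (-m)) K L hf' hg' hgf' hfg'
      C X hC hXd' (by simpa using hneg)
    refine ⟨|f (0:ℤ)| + 4 * X + 3 * C, fun x => ?_⟩
    have h1 := hmain x
    simp only [abs_neg] at h1
    rwa [show -f x - x = -(f x + x) from by ring, abs_neg] at h1
  · exfalso
    have h2 := rigid_lower (⇑f) (⇑f.symm) K L hf hg hgf hfg X 0
    rw [h0] at h2
    rw [show |X - (0:ℤ)| = X from by rw [sub_zero]; exact abs_of_nonneg (le_of_lt hXpos),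
      show |(0:ℤ) - f 0| = |f (0:ℤ)| from by rw [zero_sub, abs_neg]] at h2
    linarith
  · left
    exact ⟨|f (0:ℤ)| + 4 * X + 3 * C,
      main_pos (⇑f) (⇑f.symm) K L hf hg hgf hfg C X hC hXd hpos⟩

lemma not_both (F : ℤ → ℤ) (M M' : ℤ) (h1 : ∀ x : ℤ, |F x - x| ≤ M)
    (h2 : ∀ x : ℤ, |F x + x| ≤ M') : False := by
  set x : ℤ := |M| + |M'| + 1 with hx
  have a1 := h1 x
  have a2 := h2 x
  have h3 := abs_add_le (F x + x) (-(F x - x))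
  rw [abs_neg, show F x + x + -(F x - x) = 2 * x from by ring] at h3
  have hxpos : 0 ≤ 2 * x := by
    have := abs_nonneg M; have := abs_nonneg M'; linarith
  rw [abs_of_nonneg hxpos] at h3
  have := le_abs_self M
  have := le_abs_self M'
  linarith


open Classical in
/-- The orientation sign of a permutation of ℤ. -/
noncomputable def sigmaBL : Equiv.Perm ℤ → ℤ := fun f =>
  if ∃ M : ℤ, ∀ x : ℤ, |f x - x| ≤ M then 1 else -1

lemma abs_comb (A B c d : ℤ) (hA : |A| ≤ c) (hB : |B| ≤ d) : |A + B| ≤ c + d :=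
  le_trans (abs_add_le A B) (by linarith)

end BLZAux

/-- The orientation map σ : BL(ℤ) → {±1} is a well-defined homomorphism. -/
theorem orientation_homomorphism :
    ∃ σ : Equiv.Perm ℤ → ℤ,
      (∀ f : Equiv.Perm ℤ, IsBiLipschitzPerm f →
        (σ f = 1 ∨ σ f = -1) ∧
        (σ f = 1 ↔ ∃ M : ℤ, ∀ x : ℤ, |f x - x| ≤ M) ∧
        (σ f = -1 ↔ ∃ M : ℤ, ∀ x : ℤ, |f x + x| ≤ M)) ∧
      (∀ f h : Equiv.Perm ℤ, IsBiLipschitzPerm f → IsBiLipschitzPerm h →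
        σ (f * h) = σ f * σ h) := by
  classical
  refine ⟨BLZAux.sigmaBL, ?_, ?_⟩
  · intro f hbl
    by_cases h : ∃ M : ℤ, ∀ x : ℤ, |f x - x| ≤ M
    · refine ⟨Or.inl (by simp only [BLZAux.sigmaBL, if_pos h]), ?_, ?_⟩
      · simp only [BLZAux.sigmaBL, if_pos h]
        exact ⟨fun _ => h, fun _ => trivial⟩
      · simp only [BLZAux.sigmaBL, if_pos h]
        constructor
        · intro h1; exact absurd h1 (by norm_num)
        · rintro ⟨M', hM'⟩
          obtain ⟨M, hM⟩ := h
          exact (BLZAux.not_both (⇑f) M M' hM hM').elim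
    · refine ⟨Or.inr (by simp only [BLZAux.sigmaBL, if_neg h]), ?_, ?_⟩
      · simp only [BLZAux.sigmaBL, if_neg h]
        constructor
        · intro h1; exact absurd h1 (by norm_num)
        · intro hh; exact absurd hh h
      · simp only [BLZAux.sigmaBL, if_neg h]
        exact ⟨fun _ => (BLZAux.exists_bdd f hbl).resolve_left h, fun _ => trivial⟩
  · intro f h hbf hbh
    by_cases hf : ∃ M : ℤ, ∀ x : ℤ, |f x - x| ≤ M <;>
      by_cases hh : ∃ M : ℤ, ∀ x : ℤ, |h x - x| ≤ M
    · -- both displacement-bounded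
      have hfP := hf
      have hhP := hh
      obtain ⟨M1, h1⟩ := hf
      obtain ⟨M2, h2⟩ := hh
      have hfh : ∃ M : ℤ, ∀ x : ℤ, |(f * h) x - x| ≤ M := by
        refine ⟨M1 + M2, fun x => ?_⟩
        rw [Equiv.Perm.mul_apply,
          show f (h x) - x = (f (h x) - h x) + (h x - x) from by ring]
        exact BLZAux.abs_comb _ _ _ _ (h1 (h x)) (h2 x)
      simp only [BLZAux.sigmaBL, if_pos hfP, if_pos hhP, if_pos hfh]
      norm_num
    · -- f bounded, h anti-bounded
      have hfP := hf
      obtain ⟨M2, h2⟩ := (BLZAux.exists_bdd h hbh).resolve_left hh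
      obtain ⟨M1, h1⟩ := hf
      have hanti : ∀ x : ℤ, |(f * h) x + x| ≤ M1 + M2 := by
        intro x
        rw [Equiv.Perm.mul_apply,
          show f (h x) + x = (f (h x) - h x) + (h x + x) from by ring]
        exact BLZAux.abs_comb _ _ _ _ (h1 (h x)) (h2 x)
      have hfh : ¬ (∃ M : ℤ, ∀ x : ℤ, |(f * h) x - x| ≤ M) := by
        rintro ⟨M, hM⟩
        exact BLZAux.not_both (⇑(f * h)) M (M1 + M2) hM hanti
      simp only [BLZAux.sigmaBL, if_pos hfP, if_neg hh, if_neg hfh]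
      norm_num
    · -- f anti-bounded, h bounded
      have hhP := hh
      obtain ⟨M1, h1⟩ := (BLZAux.exists_bdd f hbf).resolve_left hf
      obtain ⟨M2, h2⟩ := hh
      have hanti : ∀ x : ℤ, |(f * h) x + x| ≤ M1 + M2 := by
        intro x
        rw [Equiv.Perm.mul_apply,
          show f (h x) + x = (f (h x) + h x) + (x - h x) from by ring]
        refine BLZAux.abs_comb _ _ _ _ (h1 (h x)) ?_
        rw [abs_sub_comm]; exact h2 x
      have hfh : ¬ (∃ M : ℤ, ∀ x : ℤ, |(f * h) x - x| ≤ M) := by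
        rintro ⟨M, hM⟩
        exact BLZAux.not_both (⇑(f * h)) M (M1 + M2) hM hanti
      simp only [BLZAux.sigmaBL, if_neg hf, if_pos hhP, if_neg hfh]
      norm_num
    · -- both anti-bounded
      obtain ⟨M1, h1⟩ := (BLZAux.exists_bdd f hbf).resolve_left hf
      obtain ⟨M2, h2⟩ := (BLZAux.exists_bdd h hbh).resolve_left hh
      have hfh : ∃ M : ℤ, ∀ x : ℤ, |(f * h) x - x| ≤ M := by
        refine ⟨M1 + M2, fun x => ?_⟩
        rw [Equiv.Perm.mul_apply,
          show f (h x) - x = (f (h x) + h x) + (-(h x + x)) from by ring]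
        refine BLZAux.abs_comb _ _ _ _ (h1 (h x)) ?_
        rw [abs_neg]; exact h2 x
      simp only [BLZAux.sigmaBL, if_neg hf, if_neg hh, if_pos hfh]
      norm_num
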